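/- Let (Ω, μ) be a measure space with 0 < μ(Ω) < ∞, let 1 < r < 2 and c > 0 be real numbers. Then there exist constants α₁ > 0 and α₂ > 0, depending only on r, c and μ(Ω), such that for every measurable function f : Ω → [0, ∞) with ∫_Ω f^r dμ < ∞, one has ∫_Ω f² / (1 + c f^{2−r}) dμ ≥ α₁ S² / (1 + α₂ S^{2−r}), where S = ( ∫_Ω f^r dμ )^{1/r}. -/

import Mathlib

open MeasureTheory

open Real


lemma carreau_eta_mono (a : ℝ) (ha2 : a < 2) {w₁ w₂ : ℝ} (h0 : 0 ≤ w₁) (h : w₁ ≤ w₂)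
    (ha0 : 0 < a) : w₁*(a+w₁)/(1+w₁)^2 ≤ w₂*(a+w₂)/(1+w₂)^2 := by
  have h0' : (0:ℝ) ≤ w₂ := h0.trans h
  rw [div_le_div_iff₀ (by nlinarith) (by nlinarith)]
  nlinarith [mul_nonneg (sub_nonneg.2 h) (mul_nonneg h0 h0'), mul_nonneg h0 h0',
    mul_nonneg (sub_nonneg.2 h) h0, sub_nonneg.2 h]

lemma carreau_hasDerivAt (a c : ℝ) (ha1 : 1 < a) (hc : 0 < c) {s : ℝ} (hs : 0 < s) :
    HasDerivAt (fun s : ℝ => s^a/(1+c*s^(a-1)))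
      ((c*s^(a-1)) * (a + c*s^(a-1)) / (c * (1 + c*s^(a-1))^2)) s := by
  have hnum : HasDerivAt (fun s : ℝ => s ^ a) (a * s ^ (a-1)) s :=
    Real.hasDerivAt_rpow_const (Or.inl hs.ne')
  have hden : HasDerivAt (fun s : ℝ => 1 + c * s ^ (a-1)) (c * ((a-1) * s ^ (a-1-1))) s :=
    ((Real.hasDerivAt_rpow_const (p := a-1) (Or.inl hs.ne')).const_mul c).const_add 1
  have hu : (0:ℝ) ≤ s ^ (a-1) := Real.rpow_nonneg hs.le _
  have hd0 : (1 : ℝ) + c * s ^ (a-1) ≠ 0 := by positivity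
  have H := hnum.div hden hd0
  refine H.congr_deriv ?_
  have hkey : s ^ a * s ^ (a-1-1) = s ^ (a-1) * s ^ (a-1) := by
    rw [← Real.rpow_add hs, ← Real.rpow_add hs]; ring_nf
  rw [div_eq_div_iff (pow_ne_zero _ hd0) (mul_ne_zero hc.ne' (pow_ne_zero _ hd0))]
  linear_combination (-(c^2*(a-1)*(1+c*s^(a-1))^2)) * hkey

lemma carreau_continuousOn (a c : ℝ) (ha1 : 1 < a) (hc : 0 < c) :
    ContinuousOn (fun s : ℝ => s^a/(1+c*s^(a-1))) (Set.Ici 0) := by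
  apply ContinuousOn.div
  · exact fun x _ =>
      (Real.continuousAt_rpow_const x a (Or.inr (by linarith))).continuousWithinAt
  · exact fun x _ => (continuousAt_const.add (continuousAt_const.mul
      (Real.continuousAt_rpow_const x (a-1) (Or.inr (by linarith))))).continuousWithinAt
  · intro x hx
    have hx0 : (0:ℝ) ≤ x := hx
    have := Real.rpow_nonneg hx0 (a-1)
    positivity

lemma carreau_convexOn (a c : ℝ) (ha1 : 1 < a) (ha2 : a < 2) (hc : 0 < c) :
    ConvexOn ℝ (Set.Ici 0) (fun s : ℝ => s^a/(1+c*s^(a-1))) := by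
  apply MonotoneOn.convexOn_of_deriv (convex_Ici 0) (carreau_continuousOn a c ha1 hc)
  · rw [interior_Ici]
    exact fun s hs => (carreau_hasDerivAt a c ha1 hc hs).differentiableAt.differentiableWithinAt
  · rw [interior_Ici]
    intro s hs t ht hst
    rw [(carreau_hasDerivAt a c ha1 hc hs).deriv, (carreau_hasDerivAt a c ha1 hc ht).deriv]
    have hws : (0:ℝ) ≤ c * s^(a-1) := mul_nonneg hc.le (Real.rpow_nonneg (le_of_lt hs) _)
    have hw : c * s^(a-1) ≤ c * t^(a-1) :=
      mul_le_mul_of_nonneg_left (Real.rpow_le_rpow (le_of_lt hs) hst (by linarith)) hc.le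
    have hmono := carreau_eta_mono a ha2 hws hw (by linarith)
    have e : ∀ u:ℝ, c*u * (a + c*u) / (c * (1 + c*u)^2) = (c*u * (a + c*u) / (1 + c*u)^2) / c := by
      intro u; rw [mul_comm c ((1+c*u)^2), ← div_div]
    rw [e (s^(a-1)), e (t^(a-1))]
    exact (div_le_div_iff_of_pos_right hc).2 hmono

/-- Jensen-type inequality used in the proof of Lemma 5.2 of the paper
(cited there from [4, Proposition 3.1]): on a finite measure space, for
`1 < r < 2` and `c > 0` there are `α₁, α₂ > 0` such that for every nonnegative
measurable `f` with `f^r` integrable,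
`∫ f²/(1 + c f^{2−r}) ≥ α₁ S² / (1 + α₂ S^{2−r})` where `S = (∫ f^r)^{1/r}`. -/
theorem jensen_type_carreau_lower_bound
    {Ω : Type*} [MeasurableSpace Ω] (μ : Measure Ω)
    (hμ0 : 0 < μ Set.univ) (hμfin : μ Set.univ < ⊤)
    (r c : ℝ) (hr1 : 1 < r) (hr2 : r < 2) (hc : 0 < c) :
    ∃ α₁ : ℝ, 0 < α₁ ∧ ∃ α₂ : ℝ, 0 < α₂ ∧
      ∀ f : Ω → ℝ, Measurable f → (∀ x, 0 ≤ f x) →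
        Integrable (fun x => f x ^ r) μ →
        ∀ S : ℝ, S = (∫ x, f x ^ r ∂μ) ^ ((1 : ℝ) / r) →
          (∫ x, f x ^ 2 / (1 + c * f x ^ (2 - r)) ∂μ)
            ≥ α₁ * S ^ 2 / (1 + α₂ * S ^ (2 - r)) := by
  haveI : IsFiniteMeasure μ := ⟨hμfin⟩
  haveI : NeZero μ := ⟨MeasureTheory.Measure.measure_univ_pos.mp hμ0⟩
  have hr0 : (0:ℝ) < r := by linarith
  set a : ℝ := 2 / r with ha_def
  have ha1 : 1 < a := (one_lt_div hr0).2 hr2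
  have ha2 : a < 2 := by rw [ha_def, div_lt_iff₀ hr0]; nlinarith
  have hra : r * a = 2 := by rw [ha_def]; field_simp
  have hrb : r * (a - 1) = 2 - r := by rw [ha_def]; field_simp
  set M : ℝ := (μ Set.univ).toReal with hM_def
  have hM : 0 < M := ENNReal.toReal_pos hμ0.ne' hμfin.ne
  set A : ℝ := M ^ (1 - a) with hA_def
  have hA : 0 < A := Real.rpow_pos_of_pos hM _
  refine ⟨A, hA, c * A, by positivity, ?_⟩
  intro f hfm hf0 hfi S hS
  set ψ : ℝ → ℝ := fun s : ℝ => s^a/(1+c*s^(a-1)) with hψ_def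
  -- pointwise identity
  have hpt : ∀ x, f x ^ 2 / (1 + c * f x ^ (2 - r)) = ψ (f x ^ r) := by
    intro x
    have ht : (0:ℝ) ≤ f x := hf0 x
    have e2 : (f x ^ r) ^ a = f x ^ 2 := by
      rw [← Real.rpow_mul ht, hra, show ((2:ℝ)) = ((2:ℕ):ℝ) by norm_num, Real.rpow_natCast]
    have eb : (f x ^ r) ^ (a - 1) = f x ^ (2 - r) := by
      rw [← Real.rpow_mul ht, hrb]
    simp only [hψ_def, e2, eb]
  have hnonneg : ∀ x, 0 ≤ f x ^ 2 / (1 + c * f x ^ (2 - r)) := by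
    intro x
    have h1 : (0:ℝ) ≤ f x ^ (2-r) := Real.rpow_nonneg (hf0 x) _
    positivity
  have hbound : ∀ x, f x ^ 2 / (1 + c * f x ^ (2 - r)) ≤ c⁻¹ * f x ^ r := by
    intro x
    have h1 : (0:ℝ) ≤ f x ^ (2-r) := Real.rpow_nonneg (hf0 x) _
    have h2 : (0:ℝ) < 1 + c * f x ^ (2-r) := by positivity
    rw [div_le_iff₀ h2]
    have h3 : f x ^ r * f x ^ (2-r) = f x ^ 2 := by
      rw [← Real.rpow_add' (hf0 x) (by norm_num), show r + (2-r) = ((2:ℕ):ℝ) by norm_num,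
        Real.rpow_natCast]
    have h4 : (0:ℝ) ≤ f x ^ r := Real.rpow_nonneg (hf0 x) _
    have h5 : c⁻¹ * f x ^ r * (1 + c * f x ^ (2-r)) = c⁻¹ * f x ^ r + f x ^ 2 := by
      field_simp
      linear_combination c * h3
    rw [h5]
    nlinarith [mul_nonneg (inv_nonneg.2 hc.le) h4]
  have hmeas : AEStronglyMeasurable (fun x => f x ^ 2 / (1 + c * f x ^ (2 - r))) μ :=
    ((hfm.pow_const 2).div
      (measurable_const.add (measurable_const.mul (hfm.pow measurable_const)))).aestronglyMeasurable
  have hgi : Integrable (fun x => ψ (f x ^ r)) μ := by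
    have hI : Integrable (fun x => f x ^ 2 / (1 + c * f x ^ (2 - r))) μ := by
      refine (hfi.const_mul c⁻¹).mono' hmeas (ae_of_all _ fun x => ?_)
      rw [Real.norm_of_nonneg (hnonneg x)]
      exact hbound x
    exact hI.congr (ae_of_all _ fun x => (hpt x))
  -- Jensen
  have hconv := carreau_convexOn a c ha1 ha2 hc
  have hJ : ψ (⨍ x, f x ^ r ∂μ) ≤ ⨍ x, ψ (f x ^ r) ∂μ :=
    hconv.map_average_le (carreau_continuousOn a c ha1 hc) isClosed_Ici
      (ae_of_all _ fun x => Real.rpow_nonneg (hf0 x) r) hfi hgi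
  set T : ℝ := ∫ x, f x ^ r ∂μ with hT_def
  have hT0 : 0 ≤ T := integral_nonneg fun x => Real.rpow_nonneg (hf0 x) r
  have hS0 : 0 ≤ S := hS ▸ Real.rpow_nonneg hT0 _
  have hSr : S ^ r = T := by
    rw [hS, ← Real.rpow_mul hT0, one_div, inv_mul_cancel₀ hr0.ne', Real.rpow_one]
  have hIeq : (∫ x, f x ^ 2 / (1 + c * f x ^ (2 - r)) ∂μ) = ∫ x, ψ (f x ^ r) ∂μ :=
    integral_congr_ae (ae_of_all _ fun x => hpt x)
  have havg : (⨍ x, f x ^ r ∂μ) = T / M := by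
    rw [average_eq, smul_eq_mul, div_eq_inv_mul]; rfl
  have havg2 : (∫ x, ψ (f x ^ r) ∂μ) = M * ⨍ x, ψ (f x ^ r) ∂μ := by
    rw [average_eq, smul_eq_mul, ← mul_assoc, show μ.real Set.univ = M from rfl, mul_inv_cancel₀ hM.ne', one_mul]
  rw [ge_iff_le, hIeq, havg2]
  have step1 : M * ψ (T / M) ≤ M * ⨍ x, ψ (f x ^ r) ∂μ := by
    rw [← havg]; exact mul_le_mul_of_nonneg_left hJ hM.le
  refine le_trans (le_of_eq ?_) step1
  -- algebra
  have hMa : M ^ a * A = M := by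
    rw [hA_def, ← Real.rpow_add hM, show a + (1-a) = 1 by ring, Real.rpow_one]
  have hMb : M ^ (a-1) * A = 1 := by
    rw [hA_def, ← Real.rpow_add hM, show a - 1 + (1-a) = 0 by ring, Real.rpow_zero]
  have hMapos : (0:ℝ) < M ^ a := Real.rpow_pos_of_pos hM _
  have hMbpos : (0:ℝ) < M ^ (a-1) := Real.rpow_pos_of_pos hM _
  have e1 : (T / M) ^ a = S ^ 2 * (A / M) := by
    rw [← hSr, Real.div_rpow (Real.rpow_nonneg hS0 r) hM.le, ← Real.rpow_mul hS0, hra,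
      show ((2:ℝ)) = ((2:ℕ):ℝ) by norm_num, Real.rpow_natCast, mul_div_assoc',
      div_eq_div_iff hMapos.ne' hM.ne']
    linear_combination (-(S^2) : ℝ) * hMa
  have e2 : (T / M) ^ (a-1) = S ^ (2-r) * A := by
    rw [← hSr, Real.div_rpow (Real.rpow_nonneg hS0 r) hM.le, ← Real.rpow_mul hS0, hrb,
      div_eq_iff hMbpos.ne']
    linear_combination (-(S^(2-r))) * hMb
  have hS2r : (0:ℝ) ≤ S ^ (2-r) := Real.rpow_nonneg hS0 _
  have hd1 : (0:ℝ) < 1 + c * A * S ^ (2-r) := by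
    nlinarith [mul_nonneg (mul_pos hc hA).le hS2r]
  have hd2 : (0:ℝ) < 1 + c * (S ^ (2-r) * A) := by
    nlinarith [mul_nonneg (mul_pos hc hA).le hS2r]
  simp only [hψ_def]
  rw [e1, e2]
  field_simp
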